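/- Let Q be a nonempty dense linear order without endpoints, let a ∈ Q, and for j ≥ 1 let ᵃR_j = {x ∈ Q^j : x_1 > x_2 > ⋯ > x_j > a}. For all 1 ≤ m ≤ n there is a finite partition of ᵃR_m × ᵃR_n ⊆ Q^{m+n} into pairwise disjoint definable sets such that, for each 0 ≤ i ≤ m, exactly binom(n+i, i)·binom(n, m−i) of the parts are in definable bijection with ᵃR_{n+i}, and these account for all the parts. The same statement holds with ᵃR_j replaced throughout by the unbounded set R_j = {x ∈ Q^j : x_1 > x_2 > ⋯ > x_j}. -/

import Mathlib

open FirstOrder FirstOrder.Language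

attribute [local instance] FirstOrder.Language.orderStructure

/-- A subset of `Q^n` is definable if it is defined by a first-order formula in the
language of orders with finitely many parameters from `Q`. -/
def DLODefinable {Q : Type*} [LinearOrder Q] {n : ℕ} (s : Set (Fin n → Q)) : Prop :=
  ∃ A : Set Q, A.Finite ∧ A.Definable Language.order s

/-- The graph of `f` restricted to `D₁`, as a subset of `Q^(n+m)`. -/
def graphOn {Q : Type*} {n m : ℕ} (D₁ : Set (Fin n → Q))
    (f : (Fin n → Q) → (Fin m → Q)) : Set (Fin (n + m) → Q) :=
  {z | ∃ x ∈ D₁, z = Fin.append x (f x)}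

/-- A definable bijection from `D₁ ⊆ Q^n` onto `D₂ ⊆ Q^m`: a bijection from `D₁` onto `D₂`
whose graph is a definable subset of `Q^(n+m)`. -/
def DefBij {Q : Type*} [LinearOrder Q] {n m : ℕ} (D₁ : Set (Fin n → Q))
    (D₂ : Set (Fin m → Q)) : Prop :=
  ∃ f : (Fin n → Q) → (Fin m → Q), Set.BijOn f D₁ D₂ ∧ DLODefinable (graphOn D₁ f)

/-- The cartesian product of `D₁ ⊆ Q^n` and `D₂ ⊆ Q^m`, viewed inside `Q^(n+m)`. -/
def pairSet {Q : Type*} {n m : ℕ} (D₁ : Set (Fin n → Q)) (D₂ : Set (Fin m → Q)) :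
    Set (Fin (n + m) → Q) :=
  {z | ∃ x ∈ D₁, ∃ y ∈ D₂, z = Fin.append x y}

/-- `ᵃR_j`: strictly decreasing `j`-tuples all of whose entries exceed `a`. -/
def Rset {Q : Type*} [LinearOrder Q] (a : Q) (j : ℕ) : Set (Fin j → Q) :=
  {x | StrictAnti x ∧ ∀ i, a < x i}

/-- `R_j`: strictly decreasing `j`-tuples. -/
def RsetUnb (Q : Type*) [LinearOrder Q] (j : ℕ) : Set (Fin j → Q) :=
  {x | StrictAnti x}

/-! ### Definability helpers -/

section Helpers

variable {Q : Type*} [LinearOrder Q]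

instance dloOrderedStructureAux : Language.order.OrderedStructure Q := ⟨fun _ => Iff.rfl⟩

/-- Definable with single parameter `a`. -/
def ADef (a : Q) {N : ℕ} (s : Set (Fin N → Q)) : Prop :=
  ({a} : Set Q).Definable Language.order s

variable {a : Q} {N K : ℕ}

lemma ADef.dlo {s : Set (Fin N → Q)} (h : ADef a s) : DLODefinable s :=
  ⟨{a}, Set.finite_singleton a, h⟩

lemma adef_le (i j : Fin N) : ADef a {z : Fin N → Q | z i ≤ z j} := by
  rw [ADef, Set.definable_iff_exists_formula_sum]
  refine ⟨Term.le (L := Language.order)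
    (Term.var (Sum.inl (Sum.inr i))) (Term.var (Sum.inl (Sum.inr j))), ?_⟩
  ext z; simp [Formula.Realize]

lemma adef_const_le (i : Fin N) : ADef a {z : Fin N → Q | z i ≤ a} := by
  rw [ADef, Set.definable_iff_exists_formula_sum]
  refine ⟨Term.le (L := Language.order)
    (Term.var (Sum.inl (Sum.inr i))) (Term.var (Sum.inl (Sum.inl ⟨a, rfl⟩))), ?_⟩
  ext z; simp [Formula.Realize]

lemma ADef.inter {s t : Set (Fin N → Q)} (hs : ADef a s) (ht : ADef a t) :
    ADef a (s ∩ t) := Set.Definable.inter hs ht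

lemma ADef.compl {s : Set (Fin N → Q)} (hs : ADef a s) : ADef a sᶜ :=
  Set.Definable.compl hs

lemma adef_lt (i j : Fin N) : ADef a {z : Fin N → Q | z i < z j} := by
  have : {z : Fin N → Q | z i < z j} = {z : Fin N → Q | z j ≤ z i}ᶜ := by
    ext z; simp
  rw [this]; exact (adef_le j i).compl

lemma adef_const_lt (i : Fin N) : ADef a {z : Fin N → Q | a < z i} := by
  have : {z : Fin N → Q | a < z i} = {z : Fin N → Q | z i ≤ a}ᶜ := by
    ext z; simp
  rw [this]; exact (adef_const_le i).compl

lemma adef_eq (i j : Fin N) : ADef a {z : Fin N → Q | z i = z j} := by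
  have : {z : Fin N → Q | z i = z j} =
      {z : Fin N → Q | z i ≤ z j} ∩ {z : Fin N → Q | z j ≤ z i} := by
    ext z; simp [le_antisymm_iff]
  rw [this]; exact (adef_le i j).inter (adef_le j i)

lemma adef_iInter {ι : Type*} [Fintype ι] {f : ι → Set (Fin N → Q)}
    (h : ∀ i, ADef a (f i)) : ADef a (⋂ i, f i) := by
  have := Set.definable_biInter_finset (L := Language.order) (A := ({a} : Set Q))
    (f := f) h Finset.univ
  simpa [ADef] using this

lemma adef_strictAnti (σ : Fin K → Fin N) :
    ADef a {z : Fin N → Q | StrictAnti (z ∘ σ)} := by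
  classical
  have : {z : Fin N → Q | StrictAnti (z ∘ σ)} =
      ⋂ p : Fin K × Fin K,
        (if p.1 < p.2 then {z : Fin N → Q | z (σ p.2) < z (σ p.1)} else Set.univ) := by
    ext z
    simp only [Set.mem_setOf_eq, Set.mem_iInter]
    constructor
    · intro hz p
      split_ifs with h
      · exact hz h
      · trivial
    · intro hz i j hij
      have := hz (i, j)
      rw [if_pos hij] at this
      exact this
  rw [this]
  refine adef_iInter fun p => ?_
  split_ifs
  · exact adef_lt _ _
  · exact Set.definable_univ

lemma adef_gt_all (σ : Fin K → Fin N) :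
    ADef a {z : Fin N → Q | ∀ k, a < z (σ k)} := by
  have : {z : Fin N → Q | ∀ k, a < z (σ k)} =
      ⋂ k : Fin K, {z : Fin N → Q | a < z (σ k)} := by
    ext z; simp
  rw [this]; exact adef_iInter fun k => adef_const_lt _

lemma adef_eqs (ρ : Fin K → Fin N × Fin N) :
    ADef a {z : Fin N → Q | ∀ k, z (ρ k).1 = z (ρ k).2} := by
  have : {z : Fin N → Q | ∀ k, z (ρ k).1 = z (ρ k).2} =
      ⋂ k : Fin K, {z : Fin N → Q | z (ρ k).1 = z (ρ k).2} := by
    ext z; simp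
  rw [this]; exact adef_iInter fun k => adef_eq _ _

lemma ADef.preimage {M : ℕ} {s : Set (Fin N → Q)} (h : ADef a s) (f : Fin N → Fin M) :
    ADef a ((fun g : Fin M → Q => g ∘ f) ⁻¹' s) :=
  Set.Definable.preimage_comp f h

end Helpers

/-! ### Generic small lemmas -/

section Generic

variable {Q : Type*} [LinearOrder Q]

lemma strictAnti_eq_of_range_eq {k : ℕ} {f g : Fin k → Q} (hf : StrictAnti f)
    (hg : StrictAnti g) (h : Set.range f = Set.range g) : f = g :=
  Set.range_injOn_strictAnti hf hg h

lemma range_coe_iso {α : Type*} [LinearOrder α] {s : Finset α} {k : ℕ} (e : Fin k ≃o ↥s) :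
    Set.range (fun j => (e j : α)) = ↑s := by
  ext q
  constructor
  · rintro ⟨j, rfl⟩; exact (e j).2
  · intro hq; exact ⟨e.symm ⟨q, hq⟩, by simp⟩

lemma append_decomp {M N : ℕ} (z : Fin (M + N) → Q) :
    z = Fin.append (z ∘ Fin.castAdd N) (z ∘ Fin.natAdd M) := by
  funext j
  refine Fin.addCases (fun l => ?_) (fun l => ?_) j
  · rw [Fin.append_left]; rfl
  · rw [Fin.append_right]; rfl

lemma graphOn_comp_eq {N K : ℕ} (D : Set (Fin N → Q)) (σ : Fin K → Fin N) :
    graphOn D (fun z => z ∘ σ) =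
      ((fun w : Fin (N + K) → Q => w ∘ Fin.castAdd K) ⁻¹' D) ∩
        {w | ∀ k, w (Fin.natAdd N k) = w (Fin.castAdd K (σ k))} := by
  ext w
  constructor
  · rintro ⟨x, hx, rfl⟩
    have hc : (Fin.append x (x ∘ σ)) ∘ Fin.castAdd K = x := by
      funext j; exact Fin.append_left _ _ j
    refine ⟨by simpa [hc] using hx, fun k => ?_⟩
    rw [Fin.append_right, Fin.append_left]; rfl
  · rintro ⟨h1, h2⟩
    refine ⟨w ∘ Fin.castAdd K, h1, ?_⟩
    funext j
    refine Fin.addCases (fun l => ?_) (fun l => ?_) j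
    · rw [Fin.append_left]; rfl
    · rw [Fin.append_right]
      exact h2 l

end Generic

/-! ### Interleaving patterns -/

section Pattern

variable {m n i : ℕ}

/-- An interleaving pattern. -/
@[ext]
structure Pat (m n i : ℕ) : Type where
  S : Finset (Fin (n + i))
  hS : S.card = i
  T : Finset (Fin n)
  hT : T.card = m - i

namespace Pat

/-- increasing enumeration of the complement of `S`. -/
noncomputable def isoS (p : Pat m n i) : Fin n ≃o ↥((p.S)ᶜ : Finset (Fin (n + i))) :=
  (p.S)ᶜ.orderIsoOfFin (by
    have h1 := p.hS
    have h2 : ((p.S)ᶜ : Finset (Fin (n+i))).card = (n + i) - p.S.card := by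
      rw [Finset.card_compl, Fintype.card_fin]
    omega)

noncomputable def P (p : Pat m n i) : Finset (Fin (n + i)) :=
  p.S ∪ (p.T.image fun j => (p.isoS j : Fin (n + i)))

lemma isoS_coe_strictMono (p : Pat m n i) :
    StrictMono fun j => (p.isoS j : Fin (n + i)) :=
  fun _ _ h => p.isoS.strictMono h

lemma isoS_coe_injective (p : Pat m n i) :
    Function.Injective fun j => (p.isoS j : Fin (n + i)) :=
  p.isoS_coe_strictMono.injective

lemma isoS_mem_compl (p : Pat m n i) (j : Fin n) : (p.isoS j : Fin (n + i)) ∉ p.S := by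
  have h2 := (p.isoS j).2
  rw [Finset.mem_compl] at h2
  exact h2

lemma hP (p : Pat m n i) (him : i ≤ m) (hmn : m ≤ n) : p.P.card = m := by
  rw [P, Finset.card_union_of_disjoint, Finset.card_image_of_injective _ p.isoS_coe_injective,
    p.hS, p.hT]
  · omega
  · rw [Finset.disjoint_right]
    rintro x hx
    simp only [Finset.mem_image] at hx
    obtain ⟨j, _, rfl⟩ := hx
    exact p.isoS_mem_compl j

variable (him : i ≤ m) (hmn : m ≤ n)

noncomputable def isoP (p : Pat m n i) : Fin m ≃o ↥(p.P) :=
  p.P.orderIsoOfFin (p.hP him hmn)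

lemma isoP_coe_strictMono (p : Pat m n i) :
    StrictMono fun j => ((p.isoP him hmn j : Fin (n + i))) :=
  fun _ _ h => (p.isoP him hmn).strictMono h

lemma S_subset_P (p : Pat m n i) : p.S ⊆ p.P := Finset.subset_union_left

/-- the coordinate-selection map. -/
noncomputable def σ (p : Pat m n i) : Fin (n + i) → Fin (m + n) := fun k =>
  if h : k ∈ p.S then Fin.castAdd n ((p.isoP him hmn).symm ⟨k, p.S_subset_P h⟩)
  else Fin.natAdd m (p.isoS.symm ⟨k, by simpa using h⟩)

/-- the coordinate-duplication map. -/
noncomputable def τ (p : Pat m n i) : Fin (m + n) → Fin (n + i) :=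
  Fin.addCases (fun j => (p.isoP him hmn j : Fin (n + i))) (fun j => (p.isoS j : Fin (n + i)))

lemma τ_castAdd (p : Pat m n i) (j : Fin m) :
    p.τ him hmn (Fin.castAdd n j) = (p.isoP him hmn j : Fin (n + i)) := by
  simp [τ]

lemma τ_natAdd (p : Pat m n i) (j : Fin n) :
    p.τ him hmn (Fin.natAdd m j) = (p.isoS j : Fin (n + i)) := by
  simp [τ]

lemma τ_σ (p : Pat m n i) (k : Fin (n + i)) : p.τ him hmn (p.σ him hmn k) = k := by
  rw [σ]
  split_ifs with h
  · rw [τ_castAdd]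
    simp
  · rw [τ_natAdd]
    simp

variable {Q : Type*} [LinearOrder Q]

/-- the piece of the partition (unbounded version). -/
def pieceU (p : Pat m n i) : Set (Fin (m + n) → Q) :=
  {z | StrictAnti (z ∘ p.σ him hmn) ∧ ∀ j, z j = z (p.σ him hmn (p.τ him hmn j))}

/-- the piece of the partition (bounded version). -/
def piece (a : Q) (p : Pat m n i) : Set (Fin (m + n) → Q) :=
  p.pieceU him hmn ∩ {z | ∀ k, a < z (p.σ him hmn k)}

lemma comp_τ_mem_pieceU (p : Pat m n i) {z : Fin (n + i) → Q} (hz : StrictAnti z) :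
    z ∘ p.τ him hmn ∈ p.pieceU him hmn := by
  have hcomp : (z ∘ p.τ him hmn) ∘ p.σ him hmn = z := by
    funext k; simp [Function.comp, τ_σ]
  refine ⟨by rw [hcomp]; exact hz, fun j => ?_⟩
  simp only [Function.comp_apply, τ_σ]

lemma comp_σ_comp_τ (p : Pat m n i) (z : Fin (n + i) → Q) :
    (z ∘ p.τ him hmn) ∘ p.σ him hmn = z := by
  funext k; simp [Function.comp, τ_σ]

lemma bijOn_pieceU (p : Pat m n i) :
    Set.BijOn (fun z : Fin (m + n) → Q => z ∘ p.σ him hmn) (p.pieceU him hmn)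
      (RsetUnb Q (n + i)) := by
  refine ⟨fun z hz => hz.1, fun z hz z' hz' h => ?_, fun z hz => ?_⟩
  · funext j
    rw [hz.2 j, hz'.2 j]
    exact congrFun h _
  · exact ⟨z ∘ p.τ him hmn, p.comp_τ_mem_pieceU him hmn hz, p.comp_σ_comp_τ him hmn z⟩

lemma bijOn_piece (a : Q) (p : Pat m n i) :
    Set.BijOn (fun z : Fin (m + n) → Q => z ∘ p.σ him hmn) (p.piece him hmn a)
      (Rset a (n + i)) := by
  refine ⟨fun z hz => ⟨hz.1.1, fun k => hz.2 k⟩,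
    fun z hz z' hz' h => (p.bijOn_pieceU him hmn).2.1 hz.1 hz'.1 h, fun z hz => ?_⟩
  refine ⟨z ∘ p.τ him hmn, ⟨p.comp_τ_mem_pieceU him hmn hz.1, fun k => ?_⟩,
    p.comp_σ_comp_τ him hmn z⟩
  simpa [Function.comp, τ_σ] using hz.2 k

lemma adef_pieceU (a : Q) (p : Pat m n i) : ADef a (p.pieceU him hmn (Q := Q)) := by
  have : (p.pieceU him hmn (Q := Q)) =
      {z : Fin (m + n) → Q | StrictAnti (z ∘ p.σ him hmn)} ∩
        {z : Fin (m + n) → Q |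
          ∀ j, z ((fun j => (j, p.σ him hmn (p.τ him hmn j))) j).1 =
            z ((fun j => (j, p.σ him hmn (p.τ him hmn j))) j).2} := by
    ext z; exact Iff.rfl
  rw [this]
  exact (adef_strictAnti _).inter (adef_eqs _)

lemma adef_piece (a : Q) (p : Pat m n i) : ADef a (p.piece him hmn a) :=
  (p.adef_pieceU him hmn a).inter (adef_gt_all _)

lemma adef_graph_pieceU (a : Q) (p : Pat m n i) :
    ADef a (graphOn (p.pieceU him hmn (Q := Q)) (fun z => z ∘ p.σ him hmn)) := by
  rw [graphOn_comp_eq]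
  exact ((p.adef_pieceU him hmn a).preimage _).inter
    (adef_eqs fun k => (Fin.natAdd (m + n) k, Fin.castAdd (n + i) (p.σ him hmn k)))

lemma adef_graph_piece (a : Q) (p : Pat m n i) :
    ADef a (graphOn (p.piece him hmn a) (fun z => z ∘ p.σ him hmn)) := by
  rw [graphOn_comp_eq]
  exact ((p.adef_piece him hmn a).preimage _).inter
    (adef_eqs fun k => (Fin.natAdd (m + n) k, Fin.castAdd (n + i) (p.σ him hmn k)))

/-! range and membership facts -/

lemma range_comp_σ (p : Pat m n i) {z : Fin (m + n) → Q} (hz : z ∈ p.pieceU him hmn) :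
    Set.range (z ∘ p.σ him hmn) = Set.range z := by
  apply Set.Subset.antisymm
  · rintro q ⟨k, rfl⟩; exact ⟨p.σ him hmn k, rfl⟩
  · rintro q ⟨j, rfl⟩
    exact ⟨p.τ him hmn j, (hz.2 j).symm⟩

lemma card_image_of_mem_pieceU (p : Pat m n i) {z : Fin (m + n) → Q}
    (hz : z ∈ p.pieceU him hmn) :
    (Finset.image z Finset.univ).card = n + i := by
  classical
  have himg : Finset.image z Finset.univ = Finset.image (z ∘ p.σ him hmn) Finset.univ := by
    apply Finset.Subset.antisymm
    · intro q hq
      simp only [Finset.mem_image, Finset.mem_univ, true_and] at hq ⊢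
      obtain ⟨j, rfl⟩ := hq
      exact ⟨p.τ him hmn j, (hz.2 j).symm⟩
    · intro q hq
      simp only [Finset.mem_image, Finset.mem_univ, true_and] at hq ⊢
      obtain ⟨k, rfl⟩ := hq
      exact ⟨p.σ him hmn k, rfl⟩
  rw [himg, Finset.card_image_of_injective _ hz.1.injective, Finset.card_univ, Fintype.card_fin]

lemma mem_S_iff (p : Pat m n i) {z : Fin (m + n) → Q} (hz : z ∈ p.pieceU him hmn)
    (k : Fin (n + i)) :
    k ∈ p.S ↔ z (p.σ him hmn k) ∉ Set.range (fun j : Fin n => z (Fin.natAdd m j)) := by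
  constructor
  · rintro hk ⟨j, hj⟩
    have h1 : z (Fin.natAdd m j) = z (p.σ him hmn ((p.isoS j : Fin (n + i)))) := by
      have := hz.2 (Fin.natAdd m j)
      rwa [p.τ_natAdd him hmn] at this
    have h2 : z (p.σ him hmn (p.isoS j : Fin (n + i))) = z (p.σ him hmn k) := by
      rw [← h1]; exact hj
    have := hz.1.injective (h2 : (z ∘ p.σ him hmn) _ = (z ∘ p.σ him hmn) _)
    rw [← this] at hk
    exact p.isoS_mem_compl j hk
  · intro hk
    by_contra hmem
    apply hk
    rw [σ, dif_neg hmem]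
    exact ⟨_, rfl⟩

lemma mem_T_iff (p : Pat m n i) {z : Fin (m + n) → Q} (hz : z ∈ p.pieceU him hmn)
    (j : Fin n) :
    j ∈ p.T ↔ z (Fin.natAdd m j) ∈ Set.range (fun l : Fin m => z (Fin.castAdd n l)) := by
  have hyd : ∀ j' : Fin n, z (Fin.natAdd m j') = z (p.σ him hmn (p.isoS j' : Fin (n + i))) := by
    intro j'
    have := hz.2 (Fin.natAdd m j')
    rwa [p.τ_natAdd him hmn] at this
  have hxd : ∀ l : Fin m,
      z (Fin.castAdd n l) = z (p.σ him hmn (p.isoP him hmn l : Fin (n + i))) := by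
    intro l
    have := hz.2 (Fin.castAdd n l)
    rwa [p.τ_castAdd him hmn] at this
  constructor
  · intro hj
    have hmemP : (p.isoS j : Fin (n + i)) ∈ p.P :=
      Finset.mem_union_right _ (Finset.mem_image_of_mem _ hj)
    refine ⟨(p.isoP him hmn).symm ⟨_, hmemP⟩, ?_⟩
    change z (Fin.castAdd n _) = z (Fin.natAdd m j)
    rw [hxd, hyd]
    congr 2
    simp
  · rintro ⟨l, hl⟩
    replace hl : z (Fin.castAdd n l) = z (Fin.natAdd m j) := hl
    rw [hxd, hyd] at hl
    have := hz.1.injective (hl : (z ∘ p.σ him hmn) _ = (z ∘ p.σ him hmn) _)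
    have hmemP : (p.isoS j : Fin (n + i)) ∈ p.P := by
      rw [← this]; exact (p.isoP him hmn l).2
    rcases Finset.mem_union.1 hmemP with h | h
    · exact absurd h (p.isoS_mem_compl j)
    · obtain ⟨t, ht, hts⟩ := Finset.mem_image.1 h
      rwa [← p.isoS_coe_injective hts]

/-- Two patterns (same `i`) sharing a point of their pieces are equal. -/
lemma eq_of_mem_pieceU {p p' : Pat m n i} {z : Fin (m + n) → Q}
    (hz : z ∈ p.pieceU him hmn) (hz' : z ∈ p'.pieceU him hmn) : p = p' := by
  have hw : z ∘ p.σ him hmn = z ∘ p'.σ him hmn :=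
    strictAnti_eq_of_range_eq hz.1 hz'.1
      (by rw [p.range_comp_σ him hmn hz, p'.range_comp_σ him hmn hz'])
  have hT : p.T = p'.T := by
    ext j
    rw [p.mem_T_iff him hmn hz, p'.mem_T_iff him hmn hz']
  have hSval : p.S = p'.S := by
    ext k
    rw [p.mem_S_iff him hmn hz k, p'.mem_S_iff him hmn hz' k]
    rw [show z (p.σ him hmn k) = z (p'.σ him hmn k) from congrFun hw k]
  exact Pat.ext hSval hT

/-- A piece is contained in the product set. -/
lemma pieceU_subset_pairSet (p : Pat m n i) :
    p.pieceU him hmn (Q := Q) ⊆ pairSet (RsetUnb Q m) (RsetUnb Q n) := by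
  intro z hz
  have hx : z ∘ Fin.castAdd n = (z ∘ p.σ him hmn) ∘ (fun j => (p.isoP him hmn j : Fin (n+i))) := by
    funext l
    have := hz.2 (Fin.castAdd n l)
    rwa [p.τ_castAdd him hmn] at this
  have hy : z ∘ Fin.natAdd m = (z ∘ p.σ him hmn) ∘ (fun j => (p.isoS j : Fin (n+i))) := by
    funext l
    have := hz.2 (Fin.natAdd m l)
    rwa [p.τ_natAdd him hmn] at this
  refine ⟨z ∘ Fin.castAdd n, ?_, z ∘ Fin.natAdd m, ?_, append_decomp z⟩
  · rw [RsetUnb, Set.mem_setOf_eq, hx]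
    exact hz.1.comp_strictMono (p.isoP_coe_strictMono him hmn)
  · rw [RsetUnb, Set.mem_setOf_eq, hy]
    exact hz.1.comp_strictMono p.isoS_coe_strictMono

lemma gt_all_of_mem_pieceU (p : Pat m n i) {a : Q} {z : Fin (m + n) → Q}
    (hz : z ∈ p.pieceU him hmn) (ha : ∀ k, a < z (p.σ him hmn k)) (j : Fin (m + n)) :
    a < z j := by
  rw [hz.2 j]; exact ha _

end Pat

end Pattern
/-! ### Covering: every pair of tuples lies in some piece -/

section Cover

variable {Q : Type*} [LinearOrder Q] {m n : ℕ}

lemma exists_pat (hmn : m ≤ n) {x : Fin m → Q} {y : Fin n → Q}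
    (hx : StrictAnti x) (hy : StrictAnti y) :
    ∃ (i : ℕ) (hi : i ≤ m) (p : Pat m n i),
      Fin.append x y ∈ p.pieceU hi hmn := by
  classical
  set X := Finset.image x Finset.univ with hX
  set Y := Finset.image y Finset.univ with hY
  set V := X ∪ Y with hV
  have hXcard : X.card = m := by
    rw [hX, Finset.card_image_of_injective _ hx.injective, Finset.card_univ, Fintype.card_fin]
  have hYcard : Y.card = n := by
    rw [hY, Finset.card_image_of_injective _ hy.injective, Finset.card_univ, Fintype.card_fin]
  have hVle : V.card ≤ m + n := by
    calc V.card ≤ X.card + Y.card := Finset.card_union_le _ _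
    _ = m + n := by rw [hXcard, hYcard]
  have hYV : Y ⊆ V := Finset.subset_union_right
  have hXV : X ⊆ V := Finset.subset_union_left
  have hnV : n ≤ V.card := hYcard ▸ Finset.card_le_card hYV
  refine ⟨V.card - n, by omega, ?_⟩
  set i := V.card - n with hidef
  have hVcard : V.card = n + i := by omega
  set e := V.orderIsoOfFin hVcard with he
  set w : Fin (n + i) → Q := fun k => (e (Fin.rev k) : Q) with hw
  have hwanti : StrictAnti w := by
    intro k l hkl
    have : e (Fin.rev l) < e (Fin.rev k) := e.strictMono (Fin.rev_lt_rev.mpr hkl)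
    exact_mod_cast this
  have hwmem : ∀ k, w k ∈ V := fun k => (e (Fin.rev k)).2
  have hwsurj : ∀ q ∈ V, ∃ k, w k = q := by
    intro q hq
    exact ⟨Fin.rev (e.symm ⟨q, hq⟩), by simp [hw]⟩
  have hwinj : Function.Injective w := hwanti.injective
  -- the pattern
  set S : Finset (Fin (n + i)) := Finset.univ.filter (fun k => w k ∉ Y) with hSdef
  set T : Finset (Fin n) := Finset.univ.filter (fun j => y j ∈ X) with hTdef
  have hmemS : ∀ k, k ∈ S ↔ w k ∉ Y := by intro k; simp [hSdef]
  have hmemT : ∀ j, j ∈ T ↔ y j ∈ X := by intro j; simp [hTdef]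
  -- card of S
  have hCimg : (Finset.univ.filter (fun k => w k ∈ Y)).image w = Y := by
    apply Finset.Subset.antisymm
    · intro q hq
      simp only [Finset.mem_image, Finset.mem_filter, Finset.mem_univ, true_and] at hq
      obtain ⟨k, hk, rfl⟩ := hq
      exact hk
    · intro q hq
      obtain ⟨k, rfl⟩ := hwsurj q (hYV hq)
      exact Finset.mem_image_of_mem _ (by simp [hq])
  have hCcard : (Finset.univ.filter (fun k => w k ∈ Y)).card = n := by
    have h' := Finset.card_image_of_injective (Finset.univ.filter (fun k => w k ∈ Y)) hwinj
    rw [hCimg] at h'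
    omega
  have hScard : S.card = i := by
    have : S = Finset.univ \ (Finset.univ.filter (fun k => w k ∈ Y)) := by
      rw [hSdef, ← Finset.filter_not]
    rw [this, Finset.card_sdiff_of_subset (Finset.filter_subset _ _), hCcard, Finset.card_univ,
      Fintype.card_fin]
    omega
  -- card of T
  have hTimg : T.image y = X ∩ Y := by
    apply Finset.Subset.antisymm
    · intro q hq
      simp only [Finset.mem_image, hTdef, Finset.mem_filter, Finset.mem_univ, true_and] at hq
      obtain ⟨j, hj, rfl⟩ := hq
      exact Finset.mem_inter.2 ⟨hj, by simp [hY, Finset.mem_image]⟩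
    · intro q hq
      rw [Finset.mem_inter] at hq
      obtain ⟨j, _, rfl⟩ := Finset.mem_image.1 (hY ▸ hq.2)
      exact Finset.mem_image_of_mem _ (by simp [hTdef, hq.1])
  have hTcard : T.card = m - i := by
    have h1 : X.card + Y.card = V.card + (X ∩ Y).card := by
      rw [hV, Finset.card_union_add_card_inter]
    have h2 : T.card = (X ∩ Y).card := by
      rw [← hTimg, Finset.card_image_of_injective _ hy.injective]
    omega
  set p : Pat m n i := ⟨S, hScard, T, hTcard⟩ with hp
  have hi : i ≤ m := by omega
  refine ⟨p, ?_⟩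
  -- identify y with w ∘ isoS
  have hySC : ∀ k : Fin (n + i), (k ∈ (S : Finset (Fin (n+i)))ᶜ) ↔ w k ∈ Y := by
    intro k
    rw [Finset.mem_compl, hmemS, not_not]
  have hyeq : y = fun j => w (p.isoS j : Fin (n + i)) := by
    apply strictAnti_eq_of_range_eq hy
      (hwanti.comp_strictMono p.isoS_coe_strictMono)
    show Set.range y = Set.range (fun j => w (p.isoS j : Fin (n + i)))
    have h1 : Set.range (fun j => w (p.isoS j : Fin (n + i))) = ↑Y := by
      apply Set.Subset.antisymm
      · rintro q ⟨j, rfl⟩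
        have := (hySC (p.isoS j : Fin (n + i))).1 (p.isoS j).2
        exact_mod_cast this
      · rintro q hq
        have hq' : q ∈ Y := hq
        obtain ⟨k, rfl⟩ := hwsurj q (hYV hq')
        have hk : k ∈ (S : Finset (Fin (n+i)))ᶜ := (hySC k).2 hq'
        exact ⟨p.isoS.symm ⟨k, hk⟩, by simp⟩
    rw [h1]
    apply Set.Subset.antisymm
    · rintro q ⟨j, rfl⟩
      exact_mod_cast Finset.mem_image_of_mem y (Finset.mem_univ j)
    · rintro q hq
      obtain ⟨j, _, rfl⟩ := Finset.mem_image.1 hq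
      exact ⟨j, rfl⟩
  -- identify x with w ∘ isoP
  have hwP : ∀ u : Fin (n + i), u ∈ p.P ↔ w u ∈ X := by
    intro u
    constructor
    · intro hu
      rcases Finset.mem_union.1 hu with h | h
      · have hnotY : w u ∉ Y := (hmemS u).1 h
        have := hwmem u
        rw [hV, Finset.mem_union] at this
        tauto
      · obtain ⟨j, hj, rfl⟩ := Finset.mem_image.1 h
        have : w (p.isoS j : Fin (n + i)) = y j := by rw [hyeq]
        rw [this]
        exact (hmemT j).1 hj
    · intro hu
      by_cases hS' : u ∈ (p.S : Finset (Fin (n + i)))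
      · exact p.S_subset_P hS'
      · have hk : u ∈ (S : Finset (Fin (n+i)))ᶜ := Finset.mem_compl.2 hS'
        have hwY : w u ∈ Y := (hySC u).1 hk
        set j := p.isoS.symm ⟨u, hk⟩ with hj
        have hju : (p.isoS j : Fin (n + i)) = u := by rw [hj]; simp
        have : y j = w u := by rw [hyeq]; simp [hju]
        have hjT : j ∈ T := (hmemT j).2 (this ▸ hu)
        apply Finset.mem_union_right
        rw [← hju]
        exact Finset.mem_image_of_mem _ hjT
  have hxeq : x = fun l => w (p.isoP hi hmn l : Fin (n + i)) := by
    apply strictAnti_eq_of_range_eq hx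
      (hwanti.comp_strictMono (p.isoP_coe_strictMono hi hmn))
    show Set.range x = Set.range (fun l => w (p.isoP hi hmn l : Fin (n + i)))
    have h1 : Set.range (fun l => w (p.isoP hi hmn l : Fin (n + i))) = ↑X := by
      apply Set.Subset.antisymm
      · rintro q ⟨l, rfl⟩
        exact_mod_cast (hwP _).1 (p.isoP hi hmn l).2
      · rintro q hq
        have hq' : q ∈ X := hq
        obtain ⟨k, rfl⟩ := hwsurj q (hXV hq')
        have hk : k ∈ p.P := (hwP k).2 hq'
        exact ⟨(p.isoP hi hmn).symm ⟨k, hk⟩, by simp⟩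
    rw [h1]
    apply Set.Subset.antisymm
    · rintro q ⟨l, rfl⟩
      exact_mod_cast Finset.mem_image_of_mem x (Finset.mem_univ l)
    · rintro q hq
      obtain ⟨l, _, rfl⟩ := Finset.mem_image.1 hq
      exact ⟨l, rfl⟩
  -- conclude
  have happ : Fin.append x y = w ∘ p.τ hi hmn := by
    funext j
    refine Fin.addCases (fun l => ?_) (fun l => ?_) j
    · rw [Fin.append_left, Function.comp_apply, p.τ_castAdd hi hmn, hxeq]
    · rw [Fin.append_right, Function.comp_apply, p.τ_natAdd hi hmn, hyeq]
  rw [happ]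
  exact p.comp_τ_mem_pieceU hi hmn hwanti

end Cover
/-! ### Counting patterns -/

/-- Patterns as pairs of subsets. -/
def patEquivProd (m n i : ℕ) :
    Pat m n i ≃ ({S : Finset (Fin (n + i)) // S.card = i} ×
      {T : Finset (Fin n) // T.card = m - i}) where
  toFun p := (⟨p.S, p.hS⟩, ⟨p.T, p.hT⟩)
  invFun q := ⟨q.1.1, q.1.2, q.2.1, q.2.2⟩
  left_inv p := rfl
  right_inv q := rfl

noncomputable def patFinEquiv (m n i : ℕ) :
    Fin (Nat.choose (n + i) i * Nat.choose n (m - i)) ≃ Pat m n i := by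
  refine (Fintype.equivFinOfCardEq ?_).symm.trans (patEquivProd m n i).symm
  rw [Fintype.card_prod, Fintype.card_finset_len, Fintype.card_finset_len,
    Fintype.card_fin, Fintype.card_fin]


/-- For `1 ≤ m ≤ n`, the product `ᵃR_m × ᵃR_n` admits a finite partition into pairwise
disjoint definable sets in which, for each `0 ≤ i ≤ m`, exactly
`binom (n+i) i * binom n (m-i)` parts are in definable bijection with `ᵃR_{n+i}`, these
accounting for all parts; similarly for the unbounded sets `R_j`. -/
theorem dlo_relatedSet_product_decomposition {Q : Type*} [LinearOrder Q] [DenselyOrdered Q]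
    [NoMinOrder Q] [NoMaxOrder Q] [Nonempty Q] (a : Q) (m n : ℕ) (hm : 1 ≤ m) (hmn : m ≤ n) :
    (∃ parts : (Σ i : Fin (m + 1), Fin (Nat.choose (n + (i : ℕ)) (i : ℕ) *
          Nat.choose n (m - (i : ℕ)))) → Set (Fin (m + n) → Q),
        (∀ p q, p ≠ q → Disjoint (parts p) (parts q)) ∧
        (⋃ p, parts p) = pairSet (Rset a m) (Rset a n) ∧
        ∀ p, DLODefinable (parts p) ∧ DefBij (parts p) (Rset a (n + (p.1 : ℕ)))) ∧
    (∃ parts : (Σ i : Fin (m + 1), Fin (Nat.choose (n + (i : ℕ)) (i : ℕ) *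
          Nat.choose n (m - (i : ℕ)))) → Set (Fin (m + n) → Q),
        (∀ p q, p ≠ q → Disjoint (parts p) (parts q)) ∧
        (⋃ p, parts p) = pairSet (RsetUnb Q m) (RsetUnb Q n) ∧
        ∀ p, DLODefinable (parts p) ∧ DefBij (parts p) (RsetUnb Q (n + (p.1 : ℕ)))) := by
  
  constructor
  · -- bounded version
    refine ⟨fun p => (patFinEquiv m n (p.1 : ℕ) p.2).piece p.1.is_le hmn a, ?_, ?_, ?_⟩
    · rintro ⟨i1, k1⟩ ⟨i2, k2⟩ hne
      rw [Set.disjoint_left]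
      intro z hz1 hz2
      have hc1 := (patFinEquiv m n (i1 : ℕ) k1).card_image_of_mem_pieceU i1.is_le hmn hz1.1
      have hc2 := (patFinEquiv m n (i2 : ℕ) k2).card_image_of_mem_pieceU i2.is_le hmn hz2.1
      have hieq : i1 = i2 := Fin.ext (by omega)
      subst hieq
      have hpeq := Pat.eq_of_mem_pieceU i1.is_le hmn hz1.1 hz2.1
      have hk : k1 = k2 := (patFinEquiv m n (i1 : ℕ)).injective hpeq
      exact hne (by rw [hk])
    · apply Set.Subset.antisymm
      · rintro z hz
        obtain ⟨p, hp⟩ := Set.mem_iUnion.1 hz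
        obtain ⟨x, hx, y, hy, heq⟩ :=
          Pat.pieceU_subset_pairSet p.1.is_le hmn (patFinEquiv m n (p.1 : ℕ) p.2) hp.1
        have hall : ∀ j, a < z j :=
          Pat.gt_all_of_mem_pieceU p.1.is_le hmn _ hp.1 hp.2
        refine ⟨x, ⟨hx, fun j => ?_⟩, y, ⟨hy, fun j => ?_⟩, heq⟩
        · have := hall (Fin.castAdd n j)
          rwa [heq, Fin.append_left] at this
        · have := hall (Fin.natAdd m j)
          rwa [heq, Fin.append_right] at this
      · rintro z ⟨x, hx, y, hy, rfl⟩
        obtain ⟨i, hi, p, hp⟩ := exists_pat hmn hx.1 hy.1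
        have hall : ∀ j, a < Fin.append x y j := by
          intro j
          refine Fin.addCases (fun l => ?_) (fun l => ?_) j
          · rw [Fin.append_left]; exact hx.2 l
          · rw [Fin.append_right]; exact hy.2 l
        refine Set.mem_iUnion.2 ⟨⟨⟨i, by omega⟩, (patFinEquiv m n i).symm p⟩, ?_⟩
        show Fin.append x y ∈
          (patFinEquiv m n i ((patFinEquiv m n i).symm p)).piece _ hmn a
        rw [Equiv.apply_symm_apply]
        exact ⟨hp, fun k => hall _⟩
    · intro p
      refine ⟨(Pat.adef_piece p.1.is_le hmn a _).dlo,
        ⟨fun z => z ∘ Pat.σ p.1.is_le hmn (patFinEquiv m n (p.1 : ℕ) p.2),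
          Pat.bijOn_piece p.1.is_le hmn a _,
          (Pat.adef_graph_piece p.1.is_le hmn a _).dlo⟩⟩
  · -- unbounded version
    refine ⟨fun p => (patFinEquiv m n (p.1 : ℕ) p.2).pieceU p.1.is_le hmn, ?_, ?_, ?_⟩
    · rintro ⟨i1, k1⟩ ⟨i2, k2⟩ hne
      rw [Set.disjoint_left]
      intro z hz1 hz2
      have hc1 := (patFinEquiv m n (i1 : ℕ) k1).card_image_of_mem_pieceU i1.is_le hmn hz1
      have hc2 := (patFinEquiv m n (i2 : ℕ) k2).card_image_of_mem_pieceU i2.is_le hmn hz2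
      have hieq : i1 = i2 := Fin.ext (by omega)
      subst hieq
      have hpeq := Pat.eq_of_mem_pieceU i1.is_le hmn hz1 hz2
      have hk : k1 = k2 := (patFinEquiv m n (i1 : ℕ)).injective hpeq
      exact hne (by rw [hk])
    · apply Set.Subset.antisymm
      · rintro z hz
        obtain ⟨p, hp⟩ := Set.mem_iUnion.1 hz
        exact Pat.pieceU_subset_pairSet p.1.is_le hmn (patFinEquiv m n (p.1 : ℕ) p.2) hp
      · rintro z ⟨x, hx, y, hy, rfl⟩
        obtain ⟨i, hi, p, hp⟩ := exists_pat hmn hx hy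
        refine Set.mem_iUnion.2 ⟨⟨⟨i, by omega⟩, (patFinEquiv m n i).symm p⟩, ?_⟩
        show Fin.append x y ∈
          (patFinEquiv m n i ((patFinEquiv m n i).symm p)).pieceU _ hmn
        rw [Equiv.apply_symm_apply]
        exact hp
    · intro p
      refine ⟨(Pat.adef_pieceU p.1.is_le hmn a _).dlo,
        ⟨fun z => z ∘ Pat.σ p.1.is_le hmn (patFinEquiv m n (p.1 : ℕ) p.2),
          Pat.bijOn_pieceU p.1.is_le hmn _,
          (Pat.adef_graph_pieceU p.1.is_le hmn a _).dlo⟩⟩
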